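/- Let g : ℝ → ℝ be an L-periodic Lipschitz continuous function with weak derivative g' ∈ L^∞(ℝ). Then the map p ↦ g(· - p), from ℝ to L²(0,L), is Fréchet differentiable at every p, with derivative h ↦ -h · g'(· - p). -/

import Mathlib

open MeasureTheory Filter

/-- Fréchet differentiability (in the o(|h|) sense in the L²(0,L) norm) of the
translation map `p ↦ g (· - p)` for an `L`-periodic Lipschitz function `g` whose
a.e. derivative `g'` is essentially bounded. -/
theorem stmt_0 (L : ℝ) (hL : 0 < L) (g g' : ℝ → ℝ) (C : NNReal)
    (hper : Function.Periodic g L) (hlip : LipschitzWith C g)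
    (hderiv : ∀ᵐ s : ℝ, HasDerivAt g (g' s) s)
    (hbd : ∀ᵐ s : ℝ, |g' s| ≤ C) (p : ℝ) :
    Tendsto
      (fun h : ℝ =>
        (∫ s in Set.Ioc (0 : ℝ) L,
            (g (s - (p + h)) - g (s - p) + h * g' (s - p)) ^ 2) ^ ((1 : ℝ) / 2) / |h|)
      (nhdsWithin 0 {0}ᶜ) (nhds 0) := by
  have hTae : Tendsto (fun s : ℝ => s - p) (ae volume) (ae volume) :=
    ((measurePreserving_sub_right (volume : Measure ℝ) p).quasiMeasurePreserving).tendsto_ae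
  -- a.e. properties at s - p
  have hderiv' : ∀ᵐ s : ℝ, HasDerivAt g (g' (s - p)) (s - p) := hTae.eventually hderiv
  have hbd' : ∀ᵐ s : ℝ, |g' (s - p)| ≤ C := hTae.eventually hbd
  -- g' is a.e. measurable
  have hg'meas : AEMeasurable (fun s : ℝ => g' (s - p)) volume := by
    have h1 : (fun s : ℝ => g' (s - p)) =ᵐ[volume] fun s => deriv g (s - p) :=
      hderiv'.mono fun s hs => hs.deriv.symm
    exact AEMeasurable.congr ((measurable_deriv g).comp (measurable_id.sub_const p)).aemeasurable
      h1.symm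
  set μ : Measure ℝ := volume.restrict (Set.Ioc (0 : ℝ) L) with hμ
  set F : ℝ → ℝ → ℝ := fun h s => ((g (s - (p + h)) - g (s - p) + h * g' (s - p)) / h) ^ 2 with hF
  have key : Tendsto (fun h : ℝ => ∫ s, F h s ∂μ) (nhdsWithin 0 {0}ᶜ) (nhds 0) := by
    have key0 := tendsto_integral_filter_of_dominated_convergence
      (μ := μ) (F := F) (f := fun _ => (0 : ℝ)) (l := nhdsWithin (0:ℝ) {0}ᶜ)
      (fun _ => ((2 * C : ℝ)) ^ 2) ?_ ?_ ?_ ?_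
    · simpa using key0
    · filter_upwards with h
      have hc : Continuous fun s : ℝ => g (s - (p + h)) - g (s - p) :=
        (hlip.continuous.comp (continuous_id.sub continuous_const)).sub
          (hlip.continuous.comp (continuous_id.sub continuous_const))
      have hm : AEMeasurable (fun s : ℝ =>
          (g (s - (p + h)) - g (s - p) + h * g' (s - p)) / h) μ :=
        ((hc.aemeasurable.add ((hg'meas.const_mul h).restrict)).div_const h)
      exact (hm.pow_const 2).aestronglyMeasurable
    · filter_upwards [self_mem_nhdsWithin] with h (hh : h ∈ ({0}ᶜ : Set ℝ))
      have hh0 : h ≠ 0 := hh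
      refine (ae_restrict_of_ae ?_)
      filter_upwards [hbd'] with s hs
      have h1 : |g (s - (p + h)) - g (s - p)| ≤ C * |h| := by
        have := hlip.dist_le_mul (s - (p + h)) (s - p)
        rw [Real.dist_eq, Real.dist_eq] at this
        calc |g (s - (p + h)) - g (s - p)| ≤ C * |s - (p + h) - (s - p)| := this
          _ = C * |h| := by ring_nf; rw [abs_neg]
      have h2 : |g (s - (p + h)) - g (s - p) + h * g' (s - p)| ≤ 2 * C * |h| := by
        calc |g (s - (p + h)) - g (s - p) + h * g' (s - p)|
            ≤ |g (s - (p + h)) - g (s - p)| + |h * g' (s - p)| := abs_add_le _ _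
          _ ≤ C * |h| + |h| * C := by
              gcongr
              rw [abs_mul]
              exact mul_le_mul_of_nonneg_left hs (abs_nonneg h)
          _ = 2 * C * |h| := by ring
      have h3 : |(g (s - (p + h)) - g (s - p) + h * g' (s - p)) / h| ≤ 2 * C := by
        rw [abs_div]
        rw [div_le_iff₀ (abs_pos.mpr hh0)]
        exact h2
      have h4 : F h s ≤ (2 * C : ℝ) ^ 2 := by
        have := sq_le_sq' (neg_le_of_abs_le h3 |>.trans_eq' rfl) (le_of_abs_le h3)
        simpa [hF] using this
      rw [Real.norm_eq_abs, abs_of_nonneg (sq_nonneg _)]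
      exact h4
    · exact (integrableOn_const_iff (C := ((2 * C : ℝ)) ^ 2)).mpr (Or.inr ((Real.volume_Ioc).trans_lt ENNReal.ofReal_lt_top))
    · refine ae_restrict_of_ae ?_
      filter_upwards [hderiv'] with s hs
      set x := s - p with hx
      have hmap : Tendsto (fun h : ℝ => x - h) (nhdsWithin 0 {0}ᶜ) (nhdsWithin x {x}ᶜ) := by
        apply Tendsto.inf
        · simpa using (tendsto_id (α := ℝ) (x := nhds 0)).const_sub x
        · refine tendsto_principal.mpr ?_
          filter_upwards [mem_principal_self _] with h (hh : h ∈ ({0}ᶜ : Set ℝ))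
          simp only [Set.mem_compl_iff, Set.mem_singleton_iff, sub_eq_self] at *
          exact hh
      have hslope : Tendsto (fun h : ℝ => slope g x (x - h)) (nhdsWithin 0 {0}ᶜ)
          (nhds (g' x)) := (hasDerivAt_iff_tendsto_slope.mp hs).comp hmap
      have : Tendsto (fun h : ℝ => (-(slope g x (x - h)) + g' x) ^ 2) (nhdsWithin 0 {0}ᶜ)
          (nhds 0) := by
        have := ((hslope.neg.add_const (g' x)).pow 2)
        simpa using this
      refine this.congr' ?_
      filter_upwards [self_mem_nhdsWithin] with h (hh : h ∈ ({0}ᶜ : Set ℝ))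
      have hh0 : h ≠ 0 := hh
      simp only [hF, slope_def_field, hx]
      have e0 : s - (p + h) = s - p - h := by ring
      have e1 : (s - p - h) - (s - p) = -h := by ring
      rw [e0]
      congr 1
      rw [e1, div_neg, neg_neg, add_div, mul_div_cancel_left₀ _ hh0]
  -- conclude
  have hfin : Tendsto (fun h : ℝ => Real.sqrt (∫ s, F h s ∂μ)) (nhdsWithin 0 {0}ᶜ) (nhds 0) := by
    have := (Real.continuous_sqrt.continuousAt (x := 0)).tendsto.comp key
    rw [Real.sqrt_zero] at this
    exact this
  refine hfin.congr' ?_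
  filter_upwards [self_mem_nhdsWithin] with h (hh : h ∈ ({0}ᶜ : Set ℝ))
  have hh0 : h ≠ 0 := hh
  have hint : ∫ s, F h s ∂μ = (∫ s in Set.Ioc (0:ℝ) L,
      (g (s - (p + h)) - g (s - p) + h * g' (s - p)) ^ 2) / h ^ 2 := by
    rw [← integral_div]
    congr 1 with s
    simp only [hF, div_pow]
  rw [hint, Real.sqrt_div (integral_nonneg fun s => sq_nonneg _), Real.sqrt_sq_eq_abs,
    Real.sqrt_eq_rpow]
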